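/- Let (x_n) be a summable sequence of positive real numbers such that the achievement set E(x_n) contains a nondegenerate interval (equivalently, E(x_n) has nonempty interior in ℝ). Then the uniqueness set U(x_n) has empty interior in ℝ. -/

import Mathlib

open Set Topology

noncomputable section

/-- The achievement set (set of subsums) of a series `∑ xₙ`. -/
def achSet (x : ℕ → ℝ) : Set ℝ := {t : ℝ | ∃ A : Set ℕ, t = ∑' n : A, x n}

/-- The uniqueness set: points having exactly one representation as a subsum. -/
def uniqSet (x : ℕ → ℝ) : Set ℝ := {t : ℝ | ∃! A : Set ℕ, t = ∑' n : A, x n}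

theorem uniqSet_interior_empty (x : ℕ → ℝ) (hpos : ∀ n, 0 < x n) (hsum : Summable x)
    (hint : (interior (achSet x)).Nonempty) :
    interior (uniqSet x) = ∅ := by
  by_contra hne
  rw [← Ne, ← nonempty_iff_ne_empty] at hne
  obtain ⟨t, ht⟩ := hne
  obtain ⟨ε, hε, hball⟩ := Metric.isOpen_iff.mp isOpen_interior t ht
  set a : ℝ := t - ε/3 with ha
  set b : ℝ := t + ε/3 with hb
  have hab : a < b := by rw [ha, hb]; linarith
  have hIcc : Icc a b ⊆ uniqSet x := by
    intro s hs
    apply interior_subset (hball ?_)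
    rw [Metric.mem_ball, Real.dist_eq, abs_lt]
    rw [mem_Icc, ha, hb] at hs
    constructor <;> linarith [hs.1, hs.2]
  -- the subsum map on Cantor space
  set σ : (ℕ → Bool) → ℝ := fun c => ∑' n, if c n then x n else 0 with hσdef
  have hσc : Continuous σ := by
    apply continuous_tsum (u := x) ?_ hsum ?_
    · intro n
      exact (continuous_of_discreteTopology
        (f := fun b : Bool => if b = true then x n else 0)).comp (continuous_apply n)
    · intro n c
      rcases Bool.eq_false_or_eq_true (c n) with h | h <;>
        simp [h, (hpos n).le, abs_of_nonneg (hpos n).le]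
  have hσ_eq : ∀ c : ℕ → Bool, σ c = ∑' n : {n | c n = true}, x n := by
    intro c
    rw [hσdef, tsum_subtype]
    exact tsum_congr fun n => by simp [Set.indicator_apply]
  -- injectivity on the preimage of [a,b]
  have hinj : ∀ c₁ c₂ : ℕ → Bool, σ c₁ ∈ Icc a b → σ c₁ = σ c₂ → c₁ = c₂ := by
    intro c₁ c₂ hmem heq
    obtain ⟨A, -, hu⟩ := hIcc hmem
    have h1 : {n | c₁ n = true} = A := hu _ (hσ_eq c₁)
    have h2 : {n | c₂ n = true} = A := hu _ (heq.trans (hσ_eq c₂))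
    have hset : {n | c₁ n = true} = {n | c₂ n = true} := h1.trans h2.symm
    funext n
    have := Set.ext_iff.mp hset n
    simp only [mem_setOf_eq] at this
    rcases Bool.eq_false_or_eq_true (c₁ n) with h | h <;>
      rcases Bool.eq_false_or_eq_true (c₂ n) with h' | h' <;> simp [h, h'] at this ⊢
  -- surjectivity onto [a,b]
  have hsurj : ∀ s ∈ Icc a b, ∃ c : ℕ → Bool, σ c = s := by
    intro s hs
    obtain ⟨A, hA, -⟩ := hIcc hs
    classical
    refine ⟨fun n => decide (n ∈ A), ?_⟩
    rw [hσ_eq]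
    have : {n | decide (n ∈ A) = true} = A := by ext n; simp
    rw [this, hA]
  -- the restriction as an equivalence
  set K : Set (ℕ → Bool) := σ ⁻¹' Icc a b with hK
  have hKclosed : IsClosed K := isClosed_Icc.preimage hσc
  haveI : CompactSpace K := isCompact_iff_compactSpace.mp hKclosed.isCompact
  have hbij : Function.Bijective (fun c : K => (⟨σ c, c.2⟩ : Icc a b)) := by
    constructor
    · rintro ⟨c₁, h₁⟩ ⟨c₂, h₂⟩ h
      have : σ c₁ = σ c₂ := congrArg Subtype.val h
      exact Subtype.ext (hinj c₁ c₂ h₁ this)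
    · rintro ⟨s, hs⟩
      obtain ⟨c, hc⟩ := hsurj s hs
      exact ⟨⟨c, by rw [hK, mem_preimage, hc]; exact hs⟩, Subtype.ext hc⟩
  have hcont : Continuous (fun c : K => (⟨σ c, c.2⟩ : Icc a b)) :=
    (hσc.comp continuous_subtype_val).subtype_mk _
  let h : K ≃ₜ Icc a b :=
    Continuous.homeoOfEquivCompactToT2 (f := Equiv.ofBijective _ hbij) hcont
  -- [a,b] is connected, K is totally disconnected: contradiction
  haveI : ConnectedSpace (Icc a b) :=
    Subtype.connectedSpace ⟨⟨a, left_mem_Icc.mpr hab.le⟩, isPreconnected_Icc⟩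
  have himg : IsConnected (h.symm '' (univ : Set (Icc a b))) :=
    isConnected_univ.image _ h.symm.continuous.continuousOn
  have huniv : h.symm '' (univ : Set (Icc a b)) = univ := by
    rw [image_univ]
    exact h.symm.surjective.range_eq
  rw [huniv] at himg
  have hsub : (univ : Set K).Subsingleton :=
    TotallyDisconnectedSpace.isTotallyDisconnected_univ _ (subset_univ _) himg.isPreconnected
  have hone : h.symm ⟨a, left_mem_Icc.mpr hab.le⟩ = h.symm ⟨b, right_mem_Icc.mpr hab.le⟩ :=
    hsub (mem_univ _) (mem_univ _)
  have hab' : (⟨a, left_mem_Icc.mpr hab.le⟩ : Icc a b) = ⟨b, right_mem_Icc.mpr hab.le⟩ :=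
    h.symm.injective hone
  exact hab.ne (congrArg Subtype.val hab')
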